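/- Let β : [0,1] → ℝ be a measurable probability density (β ≥ 0 and ∫₀¹ β(r) dr = 1) and let ε > 0. Then there exist η ∈ (0,1) and a measurable function φ : [η, 1] → ℝ with ∫_η^1 φ(r) dr = 1, inf_{r∈[η,1]} φ(r) > 0 and sup_{r∈[η,1]} φ(r) < ∞, such that for every integer k ≥ 1, | ∫₀¹ r^k β(r) dr − ∫_η^1 r^k φ(r) dr | < ε. In other words, every moment sequence of an absolutely continuous probability measure on [0,1] can be uniformly approximated by the moment sequence of a probability density on [η,1] bounded above and bounded away from zero. -/

import Mathlib

open MeasureTheory Set Filter Topology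

set_option maxHeartbeats 2000000 in
/-- Every moment sequence of an absolutely continuous probability measure on `[0,1]` can
be uniformly approximated by the moment sequence of a probability density on `[η,1]`
bounded above and bounded away from zero. -/
theorem moments_approx_by_bounded_density
    (β : ℝ → ℝ) (hβm : Measurable β) (hβnn : ∀ r ∈ Set.Icc (0:ℝ) 1, 0 ≤ β r)
    (hβint : ∫ r in Set.Icc (0:ℝ) 1, β r = 1)
    (ε : ℝ) (hε : 0 < ε) :
    ∃ η : ℝ, η ∈ Set.Ioo (0:ℝ) 1 ∧
      ∃ φ : ℝ → ℝ, Measurable φ ∧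
        (∫ r in Set.Icc η 1, φ r = 1) ∧
        (∃ a : ℝ, 0 < a ∧ ∀ r ∈ Set.Icc η 1, a ≤ φ r) ∧
        (∃ b : ℝ, ∀ r ∈ Set.Icc η 1, φ r ≤ b) ∧
        ∀ k : ℕ, 1 ≤ k →
          |(∫ r in Set.Icc (0:ℝ) 1, r ^ k * β r) - ∫ r in Set.Icc η 1, r ^ k * φ r| < ε := by
  set δ := ε / 8 with hδdef
  have hδ : 0 < δ := by positivity
  have hβInt : IntegrableOn β (Icc (0:ℝ) 1) := by
    by_contra h
    rw [integral_undef h] at hβint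
    norm_num at hβint
  have hβInt' : IntegrableOn β (Ioc (0:ℝ) 1) := hβInt.mono_set Ioc_subset_Icc_self
  have hβint' : ∫ r in Ioc (0:ℝ) 1, β r = 1 := by
    rw [← integral_Icc_eq_integral_Ioc]; exact hβint
  -- choose η
  have hUnion : (⋃ n : ℕ, Ioc (1/(n+2):ℝ) 1) = Ioc (0:ℝ) 1 := by
    ext x
    simp only [mem_iUnion, mem_Ioc]
    constructor
    · rintro ⟨n, hn, hx1⟩
      exact ⟨lt_trans (by positivity) hn, hx1⟩
    · rintro ⟨hx0, hx1⟩
      obtain ⟨n, hn⟩ := exists_nat_one_div_lt hx0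
      exact ⟨n, by
        refine lt_of_le_of_lt (one_div_le_one_div_of_le (by positivity) (by linarith)) hn, hx1⟩
  have hmonoS : Monotone (fun n : ℕ => Ioc (1/(n+2):ℝ) 1) := by
    intro n m hnm
    exact Ioc_subset_Ioc_left (one_div_le_one_div_of_le (by positivity) (by exact_mod_cast by linarith [hnm]))
  have htend := tendsto_setIntegral_of_monotone (μ := volume) (f := β)
    (fun n : ℕ => measurableSet_Ioc) hmonoS (by rw [hUnion]; exact hβInt')
  rw [hUnion, hβint'] at htend
  have hev : ∀ᶠ n : ℕ in atTop, 1 - δ < ∫ r in Ioc (1/(n+2):ℝ) 1, β r :=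
    htend.eventually (eventually_gt_nhds (by linarith))
  obtain ⟨n, hn⟩ := hev.exists
  set η : ℝ := 1/(n+2) with hηdef
  have hη0 : 0 < η := by positivity
  have hη1 : η < 1 := by
    rw [hηdef]
    rw [div_lt_one (by positivity)]
    have : (0:ℝ) ≤ n := Nat.cast_nonneg n
    linarith
  have hη1' : η ≤ 1 := hη1.le
  have hIoc01 : Ioc (0:ℝ) 1 = Ioc 0 η ∪ Ioc η 1 := (Ioc_union_Ioc_eq_Ioc hη0.le hη1').symm
  have hsub1 : Ioc (0:ℝ) η ⊆ Icc 0 1 := fun x hx => ⟨hx.1.le, hx.2.trans hη1'⟩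
  have hsub2 : Ioc η 1 ⊆ Icc (0:ℝ) 1 := fun x hx => ⟨hη0.le.trans hx.1.le, hx.2⟩
  have hβInt1 : IntegrableOn β (Ioc 0 η) := hβInt.mono_set hsub1
  have hβInt2 : IntegrableOn β (Ioc η 1) := hβInt.mono_set hsub2
  set A := ∫ r in Ioc (0:ℝ) η, β r with hAdef
  set B := ∫ r in Ioc η 1, β r with hBdef
  have hAB : A + B = 1 := by
    rw [← hβint', hIoc01,
      setIntegral_union (Ioc_disjoint_Ioc_of_le le_rfl) measurableSet_Ioc hβInt1 hβInt2]
  have hA0 : 0 ≤ A := setIntegral_nonneg measurableSet_Ioc fun r hr => hβnn r (hsub1 hr)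
  have hAδ : A < δ := by
    have : B = ∫ r in Ioc (1/(n+2):ℝ) 1, β r := by rw [hBdef, hηdef]
    rw [this] at hAB
    linarith
  -- choose M via dominated convergence
  have hDC : Tendsto (fun m : ℕ => ∫ r in Ioc η 1, (β r - min (β r) m)) atTop
      (𝓝 (∫ r in Ioc η 1, (0:ℝ))) := by
    apply tendsto_integral_of_dominated_convergence (bound := β)
    · intro m
      exact (hβm.sub (hβm.min measurable_const)).aestronglyMeasurable
    · exact hβInt2
    · intro m
      refine (ae_restrict_iff' measurableSet_Ioc).2 (Eventually.of_forall fun r hr => ?_)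
      have hb : 0 ≤ β r := hβnn r (hsub2 hr)
      have h1 : min (β r) m ≤ β r := min_le_left _ _
      have h2 : 0 ≤ min (β r) m := le_min hb (Nat.cast_nonneg m)
      rw [Real.norm_eq_abs, abs_le]
      constructor <;> linarith
    · refine Eventually.of_forall fun r => ?_
      obtain ⟨m0, hm0⟩ := exists_nat_ge (β r)
      refine tendsto_const_nhds.congr' ?_
      filter_upwards [eventually_ge_atTop m0] with m hm
      have : β r ≤ (m:ℝ) := hm0.trans (by exact_mod_cast hm)
      simp [min_eq_left this]
  rw [integral_zero] at hDC
  have hev2 : ∀ᶠ m : ℕ in atTop, |∫ r in Ioc η 1, (β r - min (β r) m)| < δ :=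
    hDC.eventually (by simpa using eventually_abs_sub_lt (0:ℝ) hδ)
  obtain ⟨N, hN⟩ := hev2.exists
  set M : ℝ := (N:ℝ) with hMdef
  have hM0 : (0:ℝ) ≤ M := Nat.cast_nonneg N
  set g : ℝ → ℝ := fun r => min (β r) M with hgdef
  have hg_meas : Measurable g := hβm.min measurable_const
  have hg_int : IntegrableOn g (Ioc η 1) := by
    refine Integrable.mono' (integrable_const M) hg_meas.aestronglyMeasurable ?_
    refine (ae_restrict_iff' measurableSet_Ioc).2 (Eventually.of_forall fun r hr => ?_)
    have hb : 0 ≤ β r := hβnn r (hsub2 hr)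
    rw [Real.norm_eq_abs, abs_le]
    exact ⟨by have := le_min hb hM0; linarith, min_le_right _ _⟩
  set T := ∫ r in Ioc η 1, (β r - g r) with hTdef
  have hTδ : T < δ := by
    have := abs_lt.1 hN
    rw [hTdef]; exact this.2
  have hT0 : 0 ≤ T :=
    setIntegral_nonneg measurableSet_Ioc fun r hr => by
      have : min (β r) M ≤ β r := min_le_left _ _
      simp only [hgdef]; linarith
  have hT_eq : T = B - ∫ r in Ioc η 1, g r := by
    rw [hTdef, integral_sub hβInt2 hg_int, hBdef]
  -- define ψ, I, φ
  set ψ : ℝ → ℝ := fun r => g r + δ with hψdef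
  have hψ_meas : Measurable ψ := hg_meas.add measurable_const
  have hψ_int : IntegrableOn ψ (Ioc η 1) := hg_int.add (integrable_const δ)
  have hvol : (volume (Ioc η 1)).toReal = 1 - η := by
    rw [Real.volume_Ioc, ENNReal.toReal_ofReal (by linarith)]
  set I := ∫ r in Ioc η 1, ψ r with hIdef
  have hI_eq : I = (B - T) + δ * (1 - η) := by
    rw [hIdef, hψdef]
    rw [integral_add hg_int (integrable_const δ), setIntegral_const, measureReal_def, hvol]
    rw [smul_eq_mul]
    have : ∫ r in Ioc η 1, g r = B - T := by rw [hT_eq]; ring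
    rw [this]; ring
  have hg_nonneg : 0 ≤ ∫ r in Ioc η 1, g r :=
    setIntegral_nonneg measurableSet_Ioc fun r hr =>
      le_min (hβnn r (hsub2 hr)) hM0
  have hBT : 0 ≤ B - T := by rw [hT_eq]; linarith [hg_nonneg]
  have hI_pos : 0 < I := by
    rw [hI_eq]
    have : 0 < δ * (1 - η) := by nlinarith
    linarith
  have hI1 : |I - 1| < 3 * δ := by
    rw [hI_eq]
    have h1 : (B - T) + δ * (1 - η) - 1 = δ * (1 - η) - A - T := by linarith
    rw [h1, abs_lt]
    have hδη : 0 ≤ δ * (1 - η) := by nlinarith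
    have hδη' : δ * (1 - η) < δ := by nlinarith
    constructor <;> nlinarith
  set φ : ℝ → ℝ := fun r => ψ r / I with hφdef
  have hφ_meas : Measurable φ := hψ_meas.div_const I
  have hφ_int1 : ∫ r in Icc η 1, φ r = 1 := by
    rw [integral_Icc_eq_integral_Ioc, hφdef]
    rw [integral_div]
    exact div_self hI_pos.ne'
  have hψ_lb : ∀ r ∈ Icc η 1, δ ≤ ψ r := fun r hr => by
    have : 0 ≤ g r := le_min (hβnn r ⟨hη0.le.trans hr.1, hr.2⟩) hM0
    simp only [hψdef]; linarith
  have hψ_ub : ∀ r, ψ r ≤ M + δ := fun r => by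
    simp only [hψdef, hgdef]
    have : min (β r) M ≤ M := min_le_right _ _
    linarith
  have hφ_lb : ∀ r ∈ Icc η 1, δ / I ≤ φ r := fun r hr => by
    rw [hφdef]
    exact (div_le_div_iff_of_pos_right hI_pos).2 (hψ_lb r hr)
  have hφ_ub : ∀ r, φ r ≤ (M + δ) / I := fun r => by
    rw [hφdef]
    exact (div_le_div_iff_of_pos_right hI_pos).2 (hψ_ub r)
  -- moment bounds
  have hmom : ∀ k : ℕ, 1 ≤ k →
      |(∫ r in Icc (0:ℝ) 1, r ^ k * β r) - ∫ r in Icc η 1, r ^ k * φ r| < ε := by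
    intro k hk
    rw [integral_Icc_eq_integral_Ioc, integral_Icc_eq_integral_Ioc]
    have hpow : ∀ r ∈ Icc (0:ℝ) 1, (0:ℝ) ≤ r ^ k ∧ r ^ k ≤ 1 := fun r hr =>
      ⟨pow_nonneg hr.1 k, pow_le_one₀ hr.1 hr.2⟩
    have h1 : IntegrableOn (fun r => r ^ k * β r) (Ioc (0:ℝ) 1) := by
      refine Integrable.mono' hβInt'
        ((measurable_id.pow_const k).mul hβm).aestronglyMeasurable ?_
      refine (ae_restrict_iff' measurableSet_Ioc).2 (Eventually.of_forall fun r hr => ?_)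
      have hr' : r ∈ Icc (0:ℝ) 1 := Ioc_subset_Icc_self hr
      obtain ⟨hp0, hp1⟩ := hpow r hr'
      have hb := hβnn r hr'
      rw [Real.norm_eq_abs, abs_of_nonneg (mul_nonneg hp0 hb)]
      nlinarith
    have h1a : IntegrableOn (fun r => r ^ k * β r) (Ioc 0 η) := h1.mono_set (by
      rw [hIoc01]; exact subset_union_left)
    have h1b : IntegrableOn (fun r => r ^ k * β r) (Ioc η 1) := h1.mono_set (by
      rw [hIoc01]; exact subset_union_right)
    have hφmeas := hφ_meas
    have h2 : IntegrableOn (fun r => r ^ k * φ r) (Ioc η 1) := by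
      refine Integrable.mono' (integrable_const ((M + δ)/I))
        ((measurable_id.pow_const k).mul hφ_meas).aestronglyMeasurable ?_
      refine (ae_restrict_iff' measurableSet_Ioc).2 (Eventually.of_forall fun r hr => ?_)
      have hr' : r ∈ Icc (0:ℝ) 1 := hsub2 hr
      obtain ⟨hp0, hp1⟩ := hpow r hr'
      have hφ0 : 0 ≤ φ r := le_trans (by positivity) (hφ_lb r ⟨hr.1.le, hr.2⟩)
      rw [Real.norm_eq_abs, abs_of_nonneg (mul_nonneg hp0 hφ0)]
      calc r ^ k * φ r ≤ 1 * φ r := by nlinarith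
        _ = φ r := one_mul _
        _ ≤ (M + δ)/I := hφ_ub r
    -- split the β integral
    have hsplit : ∫ r in Ioc (0:ℝ) 1, r ^ k * β r
        = (∫ r in Ioc (0:ℝ) η, r ^ k * β r) + ∫ r in Ioc η 1, r ^ k * β r := by
      rw [hIoc01, setIntegral_union (Ioc_disjoint_Ioc_of_le le_rfl) measurableSet_Ioc h1a h1b]
    set E1 := ∫ r in Ioc (0:ℝ) η, r ^ k * β r with hE1def
    have hE1_le : E1 ≤ A := by
      refine setIntegral_mono_on h1a hβInt1 measurableSet_Ioc fun r hr => ?_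
      obtain ⟨hp0, hp1⟩ := hpow r (hsub1 hr)
      have hb := hβnn r (hsub1 hr)
      nlinarith
    have hE1_0 : 0 ≤ E1 :=
      setIntegral_nonneg measurableSet_Ioc fun r hr =>
        mul_nonneg (hpow r (hsub1 hr)).1 (hβnn r (hsub1 hr))
    -- bound the difference on [η,1]
    set c : ℝ := |1 - I⁻¹| with hcdef
    have hbound_int : Integrable (fun r => (β r - g r) + δ + ψ r * c)
        (volume.restrict (Ioc η 1)) :=
      ((hβInt2.sub hg_int).add (integrable_const δ)).add (hψ_int.mul_const c)
    have hkey : ‖∫ r in Ioc η 1, (r ^ k * β r - r ^ k * φ r)‖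
        ≤ ∫ r in Ioc η 1, ((β r - g r) + δ + ψ r * c) := by
      refine norm_integral_le_of_norm_le hbound_int ?_
      refine (ae_restrict_iff' measurableSet_Ioc).2 (Eventually.of_forall fun r hr => ?_)
      have hr' : r ∈ Icc (0:ℝ) 1 := hsub2 hr
      obtain ⟨hp0, hp1⟩ := hpow r hr'
      have hb := hβnn r hr'
      have hψ0 : δ ≤ ψ r := hψ_lb r ⟨hr.1.le, hr.2⟩
      have hgle : g r ≤ β r := min_le_left _ _
      have step1 : ‖r ^ k * β r - r ^ k * φ r‖ ≤ |β r - φ r| := by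
        rw [Real.norm_eq_abs, ← mul_sub, abs_mul, abs_of_nonneg hp0]
        calc r ^ k * |β r - φ r| ≤ 1 * |β r - φ r| := by
              have := abs_nonneg (β r - φ r); nlinarith
          _ = |β r - φ r| := one_mul _
      have step2 : |β r - φ r| ≤ |β r - ψ r| + |ψ r - φ r| := abs_sub_le _ _ _
      have step3 : |β r - ψ r| ≤ (β r - g r) + δ := by
        have : β r - ψ r = (β r - g r) - δ := by simp only [hψdef]; ring
        rw [this, abs_le]
        constructor <;> [linarith; linarith]
      have step4 : |ψ r - φ r| = ψ r * c := by
        have : ψ r - φ r = ψ r * (1 - I⁻¹) := by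
          simp only [hφdef, div_eq_mul_inv]; ring
        rw [this, abs_mul, abs_of_nonneg (by linarith : (0:ℝ) ≤ ψ r), hcdef]
      calc ‖r ^ k * β r - r ^ k * φ r‖ ≤ |β r - φ r| := step1
        _ ≤ |β r - ψ r| + |ψ r - φ r| := step2
        _ ≤ ((β r - g r) + δ) + ψ r * c := by rw [step4] at *; linarith
    have hbound_val : ∫ r in Ioc η 1, ((β r - g r) + δ + ψ r * c)
        = T + δ * (1 - η) + I * c := by
      have i1 : Integrable (fun r => β r - g r + δ) (volume.restrict (Ioc η 1)) :=
        (hβInt2.sub hg_int).add (integrable_const δ)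
      have i2 : Integrable (fun r => ψ r * c) (volume.restrict (Ioc η 1)) :=
        hψ_int.mul_const c
      have i3 : Integrable (fun r => β r - g r) (volume.restrict (Ioc η 1)) :=
        hβInt2.sub hg_int
      rw [integral_add i1 i2, integral_add i3 (integrable_const δ),
        integral_mul_const, setIntegral_const, measureReal_def, hvol, smul_eq_mul, ← hTdef, ← hIdef]
      ring
    have hIc : I * c = |I - 1| := by
      have h := abs_mul I (1 - I⁻¹)
      rw [abs_of_pos hI_pos] at h
      rw [hcdef, ← h]
      congr 1
      field_simp
    have hdiff : (∫ r in Ioc η 1, r ^ k * β r) - ∫ r in Ioc η 1, r ^ k * φ r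
        = ∫ r in Ioc η 1, (r ^ k * β r - r ^ k * φ r) := (integral_sub h1b h2).symm
    have habs : |(∫ r in Ioc (0:ℝ) 1, r ^ k * β r) - ∫ r in Ioc η 1, r ^ k * φ r|
        ≤ E1 + (T + δ * (1 - η) + |I - 1|) := by
      rw [hsplit]
      have h3 : |E1 + ((∫ r in Ioc η 1, r ^ k * β r) - ∫ r in Ioc η 1, r ^ k * φ r)|
          ≤ |E1| + |(∫ r in Ioc η 1, r ^ k * β r) - ∫ r in Ioc η 1, r ^ k * φ r| :=
        abs_add_le _ _
      have h4 : |(∫ r in Ioc η 1, r ^ k * β r) - ∫ r in Ioc η 1, r ^ k * φ r|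
          ≤ T + δ * (1 - η) + |I - 1| := by
        rw [hdiff, ← Real.norm_eq_abs]
        calc ‖∫ r in Ioc η 1, (r ^ k * β r - r ^ k * φ r)‖
            ≤ ∫ r in Ioc η 1, ((β r - g r) + δ + ψ r * c) := hkey
          _ = T + δ * (1 - η) + I * c := hbound_val
          _ = T + δ * (1 - η) + |I - 1| := by rw [hIc]
      have h5 : |E1| = E1 := abs_of_nonneg hE1_0
      have : E1 + ((∫ r in Ioc η 1, r ^ k * β r) - ∫ r in Ioc η 1, r ^ k * φ r)
          = (E1 + ∫ r in Ioc η 1, r ^ k * β r) - ∫ r in Ioc η 1, r ^ k * φ r := by ring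
      rw [← this]
      calc |E1 + ((∫ r in Ioc η 1, r ^ k * β r) - ∫ r in Ioc η 1, r ^ k * φ r)|
          ≤ |E1| + |(∫ r in Ioc η 1, r ^ k * β r) - ∫ r in Ioc η 1, r ^ k * φ r| := h3
        _ ≤ E1 + (T + δ * (1 - η) + |I - 1|) := by rw [h5]; linarith
    have hδη : δ * (1 - η) < δ := by nlinarith
    calc |(∫ r in Ioc (0:ℝ) 1, r ^ k * β r) - ∫ r in Ioc η 1, r ^ k * φ r|
        ≤ E1 + (T + δ * (1 - η) + |I - 1|) := habs
      _ < δ + (δ + δ + 3 * δ) := by linarith [hE1_le, hAδ, hE1_0]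
      _ ≤ ε := by have hh : δ = ε / 8 := hδdef; linarith
  exact ⟨η, ⟨hη0, hη1⟩, φ, hφ_meas, hφ_int1,
    ⟨δ / I, by positivity, hφ_lb⟩, ⟨(M + δ) / I, fun r _ => hφ_ub r⟩, hmom⟩
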